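/- Let K be a compact metric space, x₀ ∈ K a fixed point, and n a positive integer. Let K_i ⊆ K (i ∈ ℕ) be compact subsets such that diam(K_i ∪ {x₀}) → 0 as i → ∞, and suppose that for each i there exists a continuous map g : K_i → ℝⁿ with a stable value (i.e. there exist y ∈ ℝⁿ and ε > 0 such that every continuous h : K_i → ℝⁿ with sup-distance at most 2ε from g satisfies y ∈ h(K_i)). Then for the generic f ∈ C(K, ℝⁿ) (in the sense of Baire category in the sup norm), f(x₀) ∈ f(K_i) for infinitely many i ∈ ℕ. -/

import Mathlib

open scoped ENNReal NNReal

set_option maxHeartbeats 1000000 in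
theorem stmt8 {K : Type*} [MetricSpace K] [CompactSpace K] (x₀ : K) (n : ℕ) (hn : 0 < n)
    (Ks : ℕ → Set K) (hKc : ∀ i, IsCompact (Ks i))
    (hdiam : Filter.Tendsto (fun i => Metric.diam (Ks i ∪ {x₀})) Filter.atTop (nhds 0))
    (hstable : ∀ i, ∃ g : ↥(Ks i) → EuclideanSpace ℝ (Fin n), Continuous g ∧
      ∃ (y : EuclideanSpace ℝ (Fin n)) (ε : ℝ), 0 < ε ∧
        ∀ h : ↥(Ks i) → EuclideanSpace ℝ (Fin n), Continuous h →
          (∀ x, dist (h x) (g x) ≤ 2 * ε) → y ∈ Set.range h) :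
    {f : C(K, EuclideanSpace ℝ (Fin n)) | {i | f x₀ ∈ ⇑f '' Ks i}.Infinite} ∈ residual _ := by
  classical
  set Y := EuclideanSpace ℝ (Fin n) with hYdef
  haveI : TietzeExtension Y := TietzeExtension.of_tvs ℝ
  set D : ℕ → Set C(K, Y) := fun N =>
    {f | ∃ i, N ≤ i ∧ ∃ ε : ℝ, 0 < ε ∧
      ∀ h : C(K, Y), dist h f < ε → h x₀ ∈ ⇑h '' Ks i} with hDdef
  -- the intersection of the D N is contained in the target set
  have hsub : (⋂ N, D N) ⊆ {f : C(K, Y) | {i | f x₀ ∈ ⇑f '' Ks i}.Infinite} := by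
    intro f hf
    simp only [Set.mem_iInter] at hf
    apply Set.infinite_of_not_bddAbove
    rintro ⟨b, hb⟩
    obtain ⟨i, hi, ε, hε, hrob⟩ := hf (b + 1)
    have hmem : f x₀ ∈ ⇑f '' Ks i := hrob f (by simpa using hε)
    have := hb hmem
    omega
  -- each D N is open
  have hopen : ∀ N, IsOpen (D N) := by
    intro N
    rw [Metric.isOpen_iff]
    rintro f ⟨i, hi, ε, hε, hrob⟩
    refine ⟨ε / 2, by linarith, fun f' hf' => ⟨i, hi, ε / 2, by linarith, fun h hh => ?_⟩⟩
    have hf'' : dist f' f < ε / 2 := hf'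
    exact hrob h ((dist_triangle h f' f).trans_lt (by linarith))
  -- each D N is dense
  have hdense : ∀ N, Dense (D N) := by
    intro N
    rw [Metric.dense_iff]
    intro f δ hδ
    obtain ⟨r, hr, hfr⟩ : ∃ r > 0, ∀ a b : K, dist a b < r → dist (f a) (f b) < δ / 4 := by
      have h1 := CompactSpace.uniformContinuous_of_continuous f.continuous
      rw [Metric.uniformContinuous_iff] at h1
      obtain ⟨r, hr, h2⟩ := h1 (δ / 4) (by linarith)
      exact ⟨r, hr, fun a b hab => h2 hab⟩
    obtain ⟨i, hdi, hiN⟩ : ∃ i, Metric.diam (Ks i ∪ {x₀}) < r ∧ N ≤ i :=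
      ((hdiam.eventually (gt_mem_nhds hr)).and (Filter.eventually_ge_atTop N)).exists
    by_cases hx0 : x₀ ∈ Ks i
    · exact ⟨f, Metric.mem_ball_self hδ, i, hiN, 1, one_pos, fun h _ => ⟨x₀, hx0, rfl⟩⟩
    obtain ⟨g, hgc, y, ε₁, hε₁, hstab⟩ := hstable i
    haveI : CompactSpace ↥(Ks i) := isCompact_iff_compactSpace.mp (hKc i)
    -- bound on ‖g x - y‖
    obtain ⟨M0, hM0⟩ : ∃ M0, ∀ x : ↥(Ks i), ‖g x - y‖ ≤ M0 := by
      have hc : Continuous fun x : ↥(Ks i) => ‖g x - y‖ := (hgc.sub continuous_const).norm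
      obtain ⟨M0, hM0⟩ := (isCompact_range hc).bddAbove
      exact ⟨M0, fun x => hM0 (Set.mem_range_self x)⟩
    set M := max M0 0 with hMdef
    have hM : 0 ≤ M := le_max_right _ _
    set t := (δ / 4) / (M + 1) with htdef
    have ht : 0 < t := by positivity
    have htbound : ∀ x : ↥(Ks i), ‖t • (g x - y)‖ ≤ δ / 4 := by
      intro x
      rw [norm_smul, Real.norm_eq_abs, abs_of_pos ht]
      calc t * ‖g x - y‖ ≤ t * (M + 1) := by
            apply mul_le_mul_of_nonneg_left _ ht.le
            exact ((hM0 x).trans (le_max_left _ _)).trans (by linarith)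
        _ = δ / 4 := by rw [htdef]; field_simp
    -- Tietze extension of t • (g - y)
    obtain ⟨Q, hQ⟩ := ContinuousMap.exists_restrict_eq (Y := Y) (hKc i).isClosed
      ⟨fun x : ↥(Ks i) => t • (g x - y), (hgc.sub continuous_const).const_smul t⟩
    have hQA : ∀ x : ↥(Ks i), Q ↑x = t • (g x - y) := fun x => ContinuousMap.congr_fun hQ x
    -- capping at δ/4
    set cap : Y → Y := fun v => ((δ / 4) / max (δ / 4) ‖v‖) • v with hcapdef
    have hmaxpos : ∀ v : Y, 0 < max (δ / 4) ‖v‖ := fun v =>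
      lt_max_iff.2 (Or.inl (by linarith))
    have hcapc : Continuous cap := by
      refine Continuous.smul (f := fun v : Y => (δ / 4) / max (δ / 4) ‖v‖) (g := id) ?_ continuous_id
      exact continuous_const.div (continuous_const.max continuous_norm)
        (fun v => (hmaxpos v).ne')
    have hcap_norm : ∀ v : Y, ‖cap v‖ ≤ δ / 4 := by
      intro v
      have : ‖cap v‖ = (δ / 4) * ‖v‖ / max (δ / 4) ‖v‖ := by
        rw [hcapdef]; rw [norm_smul, Real.norm_eq_abs, abs_of_nonneg (by positivity),
          div_mul_eq_mul_div]
      rw [this, div_le_iff₀ (hmaxpos v)]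
      have := le_max_right (δ / 4) ‖v‖
      nlinarith
    have hcap_eq : ∀ v : Y, ‖v‖ ≤ δ / 4 → cap v = v := by
      intro v hv
      rw [hcapdef]
      simp only [max_eq_left hv, div_self (by linarith : (δ:ℝ)/4 ≠ 0), one_smul]
    set Q' : C(K, Y) := ⟨fun x => cap (Q x), hcapc.comp Q.continuous⟩ with hQ'def
    have hQ'A : ∀ x : ↥(Ks i), Q' ↑x = t • (g x - y) := by
      intro x
      show cap (Q ↑x) = _
      rw [hQA x]
      exact hcap_eq _ (htbound x)
    have hQ'norm : ∀ x : K, ‖Q' x‖ ≤ δ / 4 := fun x => hcap_norm _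
    -- Urysohn function
    have hsclosed : IsClosed ({x₀} ∪ (Metric.ball x₀ r)ᶜ : Set K) :=
      isClosed_singleton.union Metric.isOpen_ball.isClosed_compl
    have hAball : ∀ z ∈ Ks i, dist z x₀ < r := by
      intro z hz
      have hbdd : Bornology.IsBounded (Ks i ∪ {x₀}) :=
        ((hKc i).union isCompact_singleton).isBounded
      exact (Metric.dist_le_diam_of_mem hbdd (Or.inl hz) (Or.inr rfl)).trans_lt hdi
    have hdisj : Disjoint ({x₀} ∪ (Metric.ball x₀ r)ᶜ : Set K) (Ks i) := by
      rw [Set.disjoint_left]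
      rintro z (rfl | hz) hzA
      · exact hx0 hzA
      · exact hz (Metric.mem_ball.mpr (hAball z hzA))
    obtain ⟨χ, hχ0, hχ1, hχ01⟩ :=
      exists_continuous_zero_one_of_isClosed hsclosed (hKc i).isClosed hdisj
    -- the perturbed map
    set F : C(K, Y) := ⟨fun x => f x + χ x • (f x₀ + Q' x - f x),
      f.continuous.add (χ.continuous.smul
        ((continuous_const.add Q'.continuous).sub f.continuous))⟩ with hFdef
    have hχx₀ : χ x₀ = 0 := hχ0 (Or.inl rfl)
    have hFx₀ : F x₀ = f x₀ := by
      show f x₀ + χ x₀ • _ = f x₀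
      rw [hχx₀, zero_smul, add_zero]
    have hFA : ∀ x : ↥(Ks i), F ↑x = f x₀ + t • (g x - y) := by
      intro x
      show f ↑x + χ ↑x • (f x₀ + Q' ↑x - f ↑x) = _
      rw [hχ1 x.2, Pi.one_apply, one_smul, hQ'A x]
      abel
    have hdistF : dist F f < δ := by
      rw [ContinuousMap.dist_lt_iff hδ]
      intro x
      show dist (f x + χ x • (f x₀ + Q' x - f x)) (f x) < δ
      rw [dist_eq_norm, add_sub_cancel_left, norm_smul, Real.norm_eq_abs,
        abs_of_nonneg (hχ01 x).1]
      by_cases hχx : χ x = 0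
      · rw [hχx]; simpa using hδ
      · have hxball : x ∈ Metric.ball x₀ r := by
          by_contra hxb
          exact hχx (hχ0 (Or.inr hxb))
        have h1 : ‖f x₀ - f x‖ < δ / 4 := by
          rw [← dist_eq_norm, dist_comm]
          exact hfr x x₀ (Metric.mem_ball.mp hxball)
        have h2 : ‖f x₀ + Q' x - f x‖ < δ / 2 := by
          have : f x₀ + Q' x - f x = (f x₀ - f x) + Q' x := by abel
          rw [this]
          calc ‖(f x₀ - f x) + Q' x‖ ≤ ‖f x₀ - f x‖ + ‖Q' x‖ := norm_add_le _ _
            _ < δ / 2 := by have := hQ'norm x; linarith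
        calc χ x * ‖f x₀ + Q' x - f x‖ ≤ ‖f x₀ + Q' x - f x‖ :=
              mul_le_of_le_one_left (norm_nonneg _) (hχ01 x).2
          _ < δ / 2 := h2
          _ < δ := by linarith
    refine ⟨F, Metric.mem_ball.mpr hdistF, i, hiN, t * ε₁, by positivity, ?_⟩
    -- robustness
    intro h hh
    set H : ↥(Ks i) → Y := fun x => t⁻¹ • (h ↑x - h x₀ + t • y) with hHdef
    have hHc : Continuous H :=
      (((h.continuous.comp continuous_subtype_val).sub continuous_const).add
        continuous_const).const_smul t⁻¹
    have hHg : ∀ x : ↥(Ks i), dist (H x) (g x) ≤ 2 * ε₁ := by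
      intro x
      have key : t • (H x - g x) = (h ↑x - F ↑x) - (h x₀ - F x₀) := by
        rw [hHdef]
        simp only [smul_sub, smul_inv_smul₀ ht.ne']
        rw [hFA x, hFx₀, smul_sub]
        abel
      have hnorm : t * ‖H x - g x‖ < 2 * (t * ε₁) := by
        have : ‖t • (H x - g x)‖ = t * ‖H x - g x‖ := by
          rw [norm_smul, Real.norm_eq_abs, abs_of_pos ht]
        rw [← this, key]
        calc ‖(h ↑x - F ↑x) - (h x₀ - F x₀)‖ ≤ ‖h ↑x - F ↑x‖ + ‖h x₀ - F x₀‖ :=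
              norm_sub_le _ _
          _ < 2 * (t * ε₁) := by
              have h1 : ‖h ↑x - F ↑x‖ ≤ dist h F := by
                rw [← dist_eq_norm]; exact ContinuousMap.dist_apply_le_dist _
              have h2 : ‖h x₀ - F x₀‖ ≤ dist h F := by
                rw [← dist_eq_norm]; exact ContinuousMap.dist_apply_le_dist _
              linarith
      rw [dist_eq_norm]
      nlinarith [norm_nonneg (H x - g x)]
    obtain ⟨x, hx⟩ := hstab H hHc hHg
    -- hx : H x = y
    have hx' : h ↑x - h x₀ + t • y = t • y := by
      have h1 : t • H x = t • y := by rw [hx]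
      have h2 : t • H x = h ↑x - h x₀ + t • y := smul_inv_smul₀ ht.ne' _
      exact h2.symm.trans h1
    have hx'' : h ↑x = h x₀ := by
      have h0 : h ↑x - h x₀ = 0 := by
        have := hx'.trans (zero_add (t • y)).symm
        exact add_right_cancel this
      exact sub_eq_zero.mp h0
    exact ⟨↑x, x.2, hx''⟩
  have hres : (⋂ N, D N) ∈ residual C(K, Y) :=
    countable_iInter_mem.mpr fun N => residual_of_dense_open (hopen N) (hdense N)
  exact Filter.mem_of_superset hres hsub
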